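/- Every binary (3, 4)-formation on the permutations xyz and zyx, except the two formations zyx xyz zyx xyz and zyx xyz xyz zyx, has at least one of the following subsequences: x z y x z y; x y x z y x z; x y z y x z y x; z y x z x y z x y; z y x z y z x y z x; z y x z y x y z x y z. -/

import Mathlib

/-- `f` is an `(r, s)`-formation: a concatenation of `s` permutations of the same
set of `r` distinct letters. -/
def IsFormation (r s : ℕ) (f : List ℕ) : Prop :=
  ∃ (S : Finset ℕ) (blocks : List (List ℕ)),
    S.card = r ∧ blocks.length = s ∧ f = blocks.flatten ∧
    ∀ b ∈ blocks, b.Nodup ∧ b.toFinset = S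

/-- `f` contains `u`: some injective renaming of the letters of `u` is a
(not necessarily contiguous) subsequence of `f`. -/
def Contains (f u : List ℕ) : Prop :=
  ∃ φ : ℕ → ℕ, Set.InjOn φ {a | a ∈ u} ∧ (u.map φ).Sublist f

/-- `w` is the formation width of `u`: the least `s` such that there exists `r`
for which every `(r, s)`-formation contains `u`. -/
def FWidth (u : List ℕ) (w : ℕ) : Prop :=
  IsLeast {s | ∃ r, ∀ f, IsFormation r s f → Contains f u} w

theorem stmt19 (x y z : ℕ) (hxy : x ≠ y) (hxz : x ≠ z) (hyz : y ≠ z)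
    (blocks : List (List ℕ)) (hlen : blocks.length = 4)
    (hblocks : ∀ b ∈ blocks, b = [x, y, z] ∨ b = [z, y, x])
    (hexc : blocks ≠ [[z, y, x], [x, y, z], [z, y, x], [x, y, z]] ∧ blocks ≠ [[z, y, x], [x, y, z], [x, y, z], [z, y, x]]) :
    ([x, z, y, x, z, y]).Sublist blocks.flatten ∨
      ([x, y, x, z, y, x, z]).Sublist blocks.flatten ∨
      ([x, y, z, y, x, z, y, x]).Sublist blocks.flatten ∨
      ([z, y, x, z, x, y, z, x, y]).Sublist blocks.flatten ∨
      ([z, y, x, z, y, z, x, y, z, x]).Sublist blocks.flatten ∨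
      ([z, y, x, z, y, x, y, z, x, y, z]).Sublist blocks.flatten := by
  classical
  set φ : ℕ → ℕ := fun n => if n = 0 then x else if n = 1 then y else z with hφ
  have hp : [x, y, z] = ([0, 1, 2] : List ℕ).map φ := by simp [hφ]
  have hq : [z, y, x] = ([2, 1, 0] : List ℕ).map φ := by simp [hφ]
  have h1 : [x, z, y, x, z, y] = ([0, 2, 1, 0, 2, 1] : List ℕ).map φ := by simp [hφ]
  have h2 : [x, y, x, z, y, x, z] = ([0, 1, 0, 2, 1, 0, 2] : List ℕ).map φ := by simp [hφ]
  have h3 : [x, y, z, y, x, z, y, x] = ([0, 1, 2, 1, 0, 2, 1, 0] : List ℕ).map φ := by simp [hφ]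
  have h4 : [z, y, x, z, x, y, z, x, y] = ([2, 1, 0, 2, 0, 1, 2, 0, 1] : List ℕ).map φ := by simp [hφ]
  have h5 : [z, y, x, z, y, z, x, y, z, x] = ([2, 1, 0, 2, 1, 2, 0, 1, 2, 0] : List ℕ).map φ := by simp [hφ]
  have h6 : [z, y, x, z, y, x, y, z, x, y, z] = ([2, 1, 0, 2, 1, 0, 1, 2, 0, 1, 2] : List ℕ).map φ := by simp [hφ]
  obtain ⟨a, b, c, d, rfl⟩ : ∃ a b c d, blocks = [a, b, c, d] := by
    match blocks, hlen with
    | [a, b, c, d], _ => exact ⟨a, b, c, d, rfl⟩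
  have ha := hblocks a (by simp)
  have hb := hblocks b (by simp)
  have hc := hblocks c (by simp)
  have hd := hblocks d (by simp)
  rcases ha with rfl | rfl <;> rcases hb with rfl | rfl <;>
    rcases hc with rfl | rfl <;> rcases hd with rfl | rfl <;>
  first
  | exact absurd rfl hexc.1
  | exact absurd rfl hexc.2
  | (simp only [List.flatten_cons, List.flatten_nil, List.append_nil, hp, hq, h1, h2, h3, h4, h5, h6,
        ← List.map_append]
     first
     | exact Or.inl (List.Sublist.map φ (by decide))
     | exact Or.inr (Or.inl (List.Sublist.map φ (by decide)))
     | exact Or.inr (Or.inr (Or.inl (List.Sublist.map φ (by decide))))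
     | exact Or.inr (Or.inr (Or.inr (Or.inl (List.Sublist.map φ (by decide)))))
     | exact Or.inr (Or.inr (Or.inr (Or.inr (Or.inl (List.Sublist.map φ (by decide))))))
     | exact Or.inr (Or.inr (Or.inr (Or.inr (Or.inr (List.Sublist.map φ (by decide)))))))
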